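/- Let V be a real (or complex) Hilbert space with the orthogonality relation v ⊤ v' iff ⟨v,v'⟩ = 0, and let W be a closed linear subspace with W ≠ {0}. Then the quotient locality on V/W is the full relation: for every pair of classes ([v₁],[v₂]) in V/W there exist w₁, w₂ ∈ W with ⟨v₁+w₁, v₂+w₂⟩ = 0. In particular (V/W, ⊤̄) is a locality vector space. -/

import Mathlib

open scoped RealInnerProductSpace

/-- The quotient locality relation on `V ⧸ W` induced by orthogonality on `V`. -/
def qRelOrth {V : Type*} [NormedAddCommGroup V] [InnerProductSpace ℝ V]
    (W : Submodule ℝ V) (a b : V ⧸ W) : Prop :=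
  ∃ u v : V, (Submodule.Quotient.mk u : V ⧸ W) = a ∧
    (Submodule.Quotient.mk v : V ⧸ W) = b ∧ (inner ℝ u v : ℝ) = 0

/-- For a real Hilbert space `V` with the orthogonality locality and a closed subspace
`W ≠ {0}`, the quotient locality on `V ⧸ W` is the full relation: any two vectors admit
representatives modulo `W` that are orthogonal. In particular `V ⧸ W` with the quotient
locality is a locality vector space. -/
theorem stmt8 {V : Type*} [NormedAddCommGroup V] [InnerProductSpace ℝ V]
    [CompleteSpace V] (W : Submodule ℝ V) (hclosed : IsClosed (W : Set V))
    (hW : W ≠ ⊥) :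
    (∀ v₁ v₂ : V, ∃ w₁ ∈ W, ∃ w₂ ∈ W, (inner ℝ (v₁ + w₁) (v₂ + w₂) : ℝ) = 0) ∧
    (∀ U : Set (V ⧸ W), ∃ p : Submodule ℝ (V ⧸ W),
      (p : Set (V ⧸ W)) = {a | ∀ u ∈ U, qRelOrth W u a}) := by
  haveI : CompleteSpace W := hclosed.completeSpace_coe
  obtain ⟨w₀, hw₀W, hw₀⟩ := Submodule.exists_mem_ne_zero_of_ne_bot hW
  have hw₀n : ‖w₀‖ ≠ 0 := norm_ne_zero_iff.mpr hw₀
  have key : ∀ v₁ v₂ : V, ∃ w₁ ∈ W, ∃ w₂ ∈ W, (inner ℝ (v₁ + w₁) (v₂ + w₂) : ℝ) = 0 := by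
    intro v₁ v₂
    set u₁ : V := v₁ - (W.orthogonalProjectionOnto v₁ : V) with hu₁def
    set u₂ : V := v₂ - (W.orthogonalProjectionOnto v₂ : V) with hu₂def
    have hu₁ : u₁ ∈ Wᗮ := W.sub_starProjection_mem_orthogonal v₁
    have hu₂ : u₂ ∈ Wᗮ := W.sub_starProjection_mem_orthogonal v₂
    set c : ℝ := inner ℝ u₁ u₂ with hc
    set s : ℝ := -c / (‖w₀‖ ^ 2) with hs
    refine ⟨w₀ - (W.orthogonalProjectionOnto v₁ : V),
      sub_mem hw₀W (W.orthogonalProjectionOnto v₁).2,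
      s • w₀ - (W.orthogonalProjectionOnto v₂ : V),
      sub_mem (W.smul_mem s hw₀W) (W.orthogonalProjectionOnto v₂).2, ?_⟩
    have h1 : v₁ + (w₀ - (W.orthogonalProjectionOnto v₁ : V)) = u₁ + w₀ := by
      rw [hu₁def]; abel
    have h2 : v₂ + (s • w₀ - (W.orthogonalProjectionOnto v₂ : V)) = u₂ + s • w₀ := by
      rw [hu₂def]; abel
    rw [h1, h2]
    have o3 : (inner ℝ u₁ w₀ : ℝ) = 0 := by
      rw [real_inner_comm]; exact hu₁ w₀ hw₀W
    have o1 : (inner ℝ u₁ (s • w₀) : ℝ) = 0 := by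
      rw [real_inner_smul_right, o3, mul_zero]
    have o2 : (inner ℝ w₀ u₂ : ℝ) = 0 := hu₂ w₀ hw₀W
    rw [inner_add_left, inner_add_right, inner_add_right, o1, o2, real_inner_smul_right,
      real_inner_self_eq_norm_sq, hs]
    field_simp
    simp [hc]
  refine ⟨key, fun U => ⟨⊤, ?_⟩⟩
  ext a
  simp only [Submodule.top_coe, Set.mem_univ, Set.mem_setOf_eq, true_iff]
  intro u hu
  obtain ⟨v₁, rfl⟩ := Submodule.Quotient.mk_surjective W u
  obtain ⟨v₂, rfl⟩ := Submodule.Quotient.mk_surjective W a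
  obtain ⟨w₁, hw₁, w₂, hw₂, h⟩ := key v₁ v₂
  refine ⟨v₁ + w₁, v₂ + w₂, ?_, ?_, h⟩
  · rw [Submodule.Quotient.mk_add, (Submodule.Quotient.mk_eq_zero W).mpr hw₁, add_zero]
  · rw [Submodule.Quotient.mk_add, (Submodule.Quotient.mk_eq_zero W).mpr hw₂, add_zero]
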